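/- For p, q, k > 1 and r, s ∈ (0,1) with r ≥ s, one has arsinh_{p,q}(s^k)/arsinh_{p,q}(r^k) ≤ (arsinh_{p,q}(s)/arsinh_{p,q}(r))^k. -/

import Mathlib

open Real Set

noncomputable def arsinhpq (p q x : ℝ) : ℝ :=
  ∫ t in (0:ℝ)..x, (1 + t ^ q) ^ (-1/p)

section Aux

variable {p q : ℝ}

lemma aux_base_pos (hq : 0 < q) {x : ℝ} (hx : 0 ≤ x) : 0 < 1 + x ^ q := by
  have := Real.rpow_nonneg hx q
  linarith

lemma aux_c_pos (hq : 0 < q) {x : ℝ} (hx : 0 ≤ x) :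
    0 < (1 + x ^ q) ^ (-1/p) :=
  Real.rpow_pos_of_pos (aux_base_pos hq hx) _

lemma aux_contOn (hq : 0 < q) :
    ContinuousOn (fun t : ℝ => (1 + t ^ q) ^ (-1/p)) (Ici 0) := by
  have h1 : ContinuousOn (fun t : ℝ => 1 + t ^ q) (Ici 0) :=
    continuousOn_const.add (continuousOn_id.rpow_const fun x _ => Or.inr hq.le)
  exact h1.rpow_const fun x hx => Or.inl (aux_base_pos hq hx).ne'

lemma aux_intble (hq : 0 < q) {x y : ℝ} (hx : 0 ≤ x) (hy : 0 ≤ y) :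
    IntervalIntegrable (fun t : ℝ => (1 + t ^ q) ^ (-1/p)) MeasureTheory.volume x y := by
  apply ContinuousOn.intervalIntegrable
  apply (aux_contOn hq).mono
  exact fun t ht => le_trans (le_inf hx hy) ht.1

lemma F_hasDerivAt (hq : 0 < q) {x : ℝ} (hx : 0 < x) :
    HasDerivAt (arsinhpq p q) ((1 + x ^ q) ^ (-1/p)) x := by
  apply intervalIntegral.integral_hasDerivAt_right (aux_intble hq le_rfl hx.le)
  · exact ((aux_contOn hq).mono Ioi_subset_Ici_self).stronglyMeasurableAtFilter
      isOpen_Ioi _ hx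
  · have h1 : ContinuousAt (fun t : ℝ => 1 + t ^ q) x :=
      continuousAt_const.add (Real.continuousAt_rpow_const x q (Or.inl hx.ne'))
    exact h1.rpow_const (Or.inl (aux_base_pos hq hx.le).ne')

lemma F_pos (hq : 0 < q) {x : ℝ} (hx : 0 < x) : 0 < arsinhpq p q x := by
  apply intervalIntegral.intervalIntegral_pos_of_pos_on (aux_intble hq le_rfl hx.le)
  · exact fun t ht => aux_c_pos hq ht.1.le
  · exact hx

lemma F_contOn (hq : 0 < q) {z : ℝ} (hz : 0 ≤ z) :
    ContinuousOn (arsinhpq p q) (Icc 0 z) := by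
  have := intervalIntegral.continuousOn_primitive_interval
    (μ := MeasureTheory.volume) (f := fun t : ℝ => (1 + t ^ q) ^ (-1/p)) (a := 0) (b := z) ?_
  · rwa [uIcc_of_le hz] at this
  · rw [uIcc_of_le hz]
    exact ((aux_contOn hq).mono Icc_subset_Ici_self).integrableOn_Icc

lemma F_le_G (hp : 1 < p) (hq : 1 < q) {z : ℝ} (hz : 0 < z)
    (hbz : 0 < 1 + (1 - q/p) * z ^ q) :
    arsinhpq p q z ≤ z * (1 + z ^ q) ^ (1 - 1/p) / (1 + (1 - q/p) * z ^ q) := by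
  have hp0 : (0:ℝ) < p := lt_trans one_pos hp
  have hq0 : (0:ℝ) < q := lt_trans one_pos hq
  set b : ℝ := 1 - q/p with hbdef
  -- the denominator is positive on the whole interval
  have hb : ∀ t ∈ Icc (0:ℝ) z, 0 < 1 + b * t ^ q := by
    intro t ht
    rcases le_or_gt 0 b with hb0 | hb0
    · have : 0 ≤ b * t ^ q := mul_nonneg hb0 (Real.rpow_nonneg ht.1 q)
      linarith
    · have htz : t ^ q ≤ z ^ q := Real.rpow_le_rpow ht.1 ht.2 hq0.le
      nlinarith
  set G : ℝ → ℝ := fun x => x * (1 + x ^ q) ^ (1 - 1/p) / (1 + b * x ^ q) with hGdef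
  have hW : ∀ t : ℝ, 0 ≤ t → 0 < 1 + t ^ q := fun t ht => aux_base_pos hq0 ht
  -- derivative of G - F on the open interval
  have hD : ∀ x ∈ Ioo (0:ℝ) z, HasDerivAt (fun y => G y - arsinhpq p q y)
      (((1 * ((1 + x ^ q) ^ (1 - 1/p)) +
          x * ((q * x ^ (q - 1)) * (1 - 1/p) * (1 + x ^ q) ^ (1 - 1/p - 1))) * (1 + b * x ^ q)
        - x * (1 + x ^ q) ^ (1 - 1/p) * (b * (q * x ^ (q - 1)))) / (1 + b * x ^ q) ^ 2
        - (1 + x ^ q) ^ (-1/p)) x := by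
    intro x hx
    have hx0 : (0:ℝ) < x := hx.1
    have hWx : (0:ℝ) < 1 + x ^ q := hW x hx0.le
    have hbx : (0:ℝ) < 1 + b * x ^ q := hb x ⟨hx0.le, hx.2.le⟩
    have hxq : HasDerivAt (fun y : ℝ => y ^ q) (q * x ^ (q - 1)) x :=
      Real.hasDerivAt_rpow_const (Or.inl hx0.ne')
    have h1 : HasDerivAt (fun y : ℝ => 1 + y ^ q) (q * x ^ (q - 1)) x := hxq.const_add 1
    have h2 : HasDerivAt (fun y : ℝ => (1 + y ^ q) ^ (1 - 1/p))
        ((q * x ^ (q - 1)) * (1 - 1/p) * (1 + x ^ q) ^ (1 - 1/p - 1)) x :=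
      h1.rpow_const (Or.inl hWx.ne')
    have h3 : HasDerivAt (fun y : ℝ => y * (1 + y ^ q) ^ (1 - 1/p))
        (1 * ((1 + x ^ q) ^ (1 - 1/p)) +
          x * ((q * x ^ (q - 1)) * (1 - 1/p) * (1 + x ^ q) ^ (1 - 1/p - 1))) x :=
      (hasDerivAt_id x).mul h2
    have h4 : HasDerivAt (fun y : ℝ => 1 + b * y ^ q) (b * (q * x ^ (q - 1))) x :=
      (hxq.const_mul b).const_add 1
    exact (h3.div h4 hbx.ne').sub (F_hasDerivAt hq0 hx0)
  -- the derivative is nonnegative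
  have hDpos : ∀ x ∈ Ioo (0:ℝ) z,
      0 ≤ (((1 * ((1 + x ^ q) ^ (1 - 1/p)) +
          x * ((q * x ^ (q - 1)) * (1 - 1/p) * (1 + x ^ q) ^ (1 - 1/p - 1))) * (1 + b * x ^ q)
        - x * (1 + x ^ q) ^ (1 - 1/p) * (b * (q * x ^ (q - 1)))) / (1 + b * x ^ q) ^ 2
        - (1 + x ^ q) ^ (-1/p)) := by
    intro x hx
    have hx0 : (0:ℝ) < x := hx.1
    have hWx : (0:ℝ) < 1 + x ^ q := hW x hx0.le
    have hbx : (0:ℝ) < 1 + b * x ^ q := hb x ⟨hx0.le, hx.2.le⟩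
    have hU : (0:ℝ) ≤ x ^ q := Real.rpow_nonneg hx0.le q
    have hA : (0:ℝ) < (1 + x ^ q) ^ (-1/p) := Real.rpow_pos_of_pos hWx _
    have e1 : (1 + x ^ q) ^ (1 - 1/p) = (1 + x ^ q) * (1 + x ^ q) ^ (-1/p) := by
      rw [show (1 - 1/p) = 1 + (-1/p) by ring, Real.rpow_add hWx, Real.rpow_one]
    have e2 : (1 + x ^ q) ^ (1 - 1/p - 1) = (1 + x ^ q) ^ (-1/p) := by
      congr 1; ring
    have e3 : x ^ (q - 1) = x ^ q / x := by
      rw [Real.rpow_sub hx0, Real.rpow_one]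
    rw [sub_nonneg, e1, e2, e3, le_div_iff₀ (by positivity)]
    have expand : (1 * ((1 + x ^ q) * (1 + x ^ q) ^ (-1/p)) +
          x * ((q * (x ^ q / x)) * (1 - 1/p) * (1 + x ^ q) ^ (-1/p))) * (1 + b * x ^ q)
        - x * ((1 + x ^ q) * (1 + x ^ q) ^ (-1/p)) * (b * (q * (x ^ q / x)))
        = (1 + x ^ q) ^ (-1/p) * ((1 + b * x ^ q) ^ 2 + q ^ 2 * x ^ q / p) := by
      rw [hbdef]
      field_simp
      ring
    rw [expand, mul_add]
    have : 0 ≤ (1 + x ^ q) ^ (-1/p) * (q ^ 2 * x ^ q / p) := by positivity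
    linarith
  -- monotonicity of G - F
  have hmono : MonotoneOn (fun y => G y - arsinhpq p q y) (Icc 0 z) := by
    apply monotoneOn_of_deriv_nonneg (convex_Icc 0 z)
    · -- continuity
      have hWc : ContinuousOn (fun y : ℝ => 1 + y ^ q) (Icc 0 z) :=
        continuousOn_const.add (continuousOn_id.rpow_const fun t _ => Or.inr hq0.le)
      have hNc : ContinuousOn (fun y : ℝ => y * (1 + y ^ q) ^ (1 - 1/p)) (Icc 0 z) :=
        continuousOn_id.mul (hWc.rpow_const fun t ht => Or.inl (hW t ht.1).ne')
      have hdc : ContinuousOn (fun y : ℝ => 1 + b * y ^ q) (Icc 0 z) :=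
        continuousOn_const.add
          ((continuousOn_id.rpow_const fun t _ => Or.inr hq0.le).const_smul b)
      exact (hNc.div hdc fun t ht => (hb t ht).ne').sub (F_contOn hq0 hz.le)
    · rw [interior_Icc]
      exact fun x hx => ((hD x hx).differentiableAt).differentiableWithinAt
    · rw [interior_Icc]
      intro x hx
      rw [(hD x hx).deriv]
      exact hDpos x hx
  have h0 : (fun y => G y - arsinhpq p q y) 0 ≤ (fun y => G y - arsinhpq p q y) z :=
    hmono (left_mem_Icc.2 hz.le) (right_mem_Icc.2 hz.le) hz.le
  have hG0 : G 0 = 0 := by simp [hGdef]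
  have hF0 : arsinhpq p q 0 = 0 := intervalIntegral.integral_same
  simp only [hG0, hF0, sub_zero] at h0
  have : arsinhpq p q z ≤ G z := by linarith
  exact this

lemma h_antitone (hp : 1 < p) (hq : 1 < q) :
    AntitoneOn (fun x => x * (1 + x ^ q) ^ (-1/p) / arsinhpq p q x) (Ioo (0:ℝ) 1) := by
  have hp0 : (0:ℝ) < p := lt_trans one_pos hp
  have hq0 : (0:ℝ) < q := lt_trans one_pos hq
  set b : ℝ := 1 - q/p with hbdef
  have hW : ∀ t : ℝ, 0 ≤ t → 0 < 1 + t ^ q := fun t ht => aux_base_pos hq0 ht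
  have hD : ∀ x ∈ Ioo (0:ℝ) 1, HasDerivAt (fun y => y * (1 + y ^ q) ^ (-1/p) / arsinhpq p q y)
      (((1 * ((1 + x ^ q) ^ (-1/p)) +
          x * ((q * x ^ (q - 1)) * (-1/p) * (1 + x ^ q) ^ (-1/p - 1))) * arsinhpq p q x
        - x * (1 + x ^ q) ^ (-1/p) * ((1 + x ^ q) ^ (-1/p))) / (arsinhpq p q x) ^ 2) x := by
    intro x hx
    have hx0 : (0:ℝ) < x := hx.1
    have hWx : (0:ℝ) < 1 + x ^ q := hW x hx0.le
    have hxq : HasDerivAt (fun y : ℝ => y ^ q) (q * x ^ (q - 1)) x :=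
      Real.hasDerivAt_rpow_const (Or.inl hx0.ne')
    have h1 : HasDerivAt (fun y : ℝ => 1 + y ^ q) (q * x ^ (q - 1)) x := hxq.const_add 1
    have h2 : HasDerivAt (fun y : ℝ => (1 + y ^ q) ^ (-1/p))
        ((q * x ^ (q - 1)) * (-1/p) * (1 + x ^ q) ^ (-1/p - 1)) x :=
      h1.rpow_const (Or.inl hWx.ne')
    have h3 : HasDerivAt (fun y : ℝ => y * (1 + y ^ q) ^ (-1/p))
        (1 * ((1 + x ^ q) ^ (-1/p)) +
          x * ((q * x ^ (q - 1)) * (-1/p) * (1 + x ^ q) ^ (-1/p - 1))) x :=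
      (hasDerivAt_id x).mul h2
    exact h3.div (F_hasDerivAt hq0 hx0) (F_pos hq0 hx0).ne'
  apply antitoneOn_of_deriv_nonpos (convex_Ioo 0 1)
  · exact fun x hx => ((hD x hx).differentiableAt).differentiableWithinAt.continuousWithinAt
  · rw [interior_Ioo]
    exact fun x hx => ((hD x hx).differentiableAt).differentiableWithinAt
  · rw [interior_Ioo]
    intro x hx
    rw [(hD x hx).deriv]
    have hx0 : (0:ℝ) < x := hx.1
    have hWx : (0:ℝ) < 1 + x ^ q := hW x hx0.le
    have hU : (0:ℝ) ≤ x ^ q := Real.rpow_nonneg hx0.le q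
    have hA : (0:ℝ) < (1 + x ^ q) ^ (-1/p) := Real.rpow_pos_of_pos hWx _
    have hFx : (0:ℝ) < arsinhpq p q x := F_pos hq0 hx0
    have e2' : (1 + x ^ q) ^ (-1/p - 1) = (1 + x ^ q) ^ (-1/p) / (1 + x ^ q) := by
      rw [Real.rpow_sub hWx, Real.rpow_one]
    have e3 : x ^ (q - 1) = x ^ q / x := by
      rw [Real.rpow_sub hx0, Real.rpow_one]
    have em : 1 * ((1 + x ^ q) ^ (-1/p)) +
          x * ((q * x ^ (q - 1)) * (-1/p) * (1 + x ^ q) ^ (-1/p - 1))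
        = (1 + x ^ q) ^ (-1/p) * (1 + b * x ^ q) / (1 + x ^ q) := by
      rw [e2', e3, hbdef]
      field_simp
      ring
    apply div_nonpos_of_nonpos_of_nonneg _ (sq_nonneg _)
    rw [sub_nonpos, em]
    rcases le_or_gt (1 + b * x ^ q) 0 with hbx | hbx
    · have hm : (1 + x ^ q) ^ (-1/p) * (1 + b * x ^ q) / (1 + x ^ q) ≤ 0 := by
        apply div_nonpos_of_nonpos_of_nonneg _ hWx.le
        exact mul_nonpos_of_nonneg_of_nonpos hA.le hbx
      have h1 : (1 + x ^ q) ^ (-1/p) * (1 + b * x ^ q) / (1 + x ^ q) * arsinhpq p q x ≤ 0 :=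
        mul_nonpos_of_nonpos_of_nonneg hm hFx.le
      have h2 : 0 ≤ x * (1 + x ^ q) ^ (-1/p) * ((1 + x ^ q) ^ (-1/p)) := by positivity
      linarith
    · have hFG := F_le_G hp hq hx0 hbx
      have hm : 0 ≤ (1 + x ^ q) ^ (-1/p) * (1 + b * x ^ q) / (1 + x ^ q) := by positivity
      calc (1 + x ^ q) ^ (-1/p) * (1 + b * x ^ q) / (1 + x ^ q) * arsinhpq p q x
          ≤ (1 + x ^ q) ^ (-1/p) * (1 + b * x ^ q) / (1 + x ^ q) *
            (x * (1 + x ^ q) ^ (1 - 1/p) / (1 + b * x ^ q)) :=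
            mul_le_mul_of_nonneg_left hFG hm
        _ = x * (1 + x ^ q) ^ (-1/p) * ((1 + x ^ q) ^ (-1/p)) := by
            have e1 : (1 + x ^ q) ^ (1 - 1/p) = (1 + x ^ q) * (1 + x ^ q) ^ (-1/p) := by
              rw [show (1 - 1/p) = 1 + (-1/p) by ring, Real.rpow_add hWx, Real.rpow_one]
            rw [e1]
            field_simp
            exact div_self (by rw [mul_comm (x ^ q) b]; exact hbx.ne')

end Aux

theorem stmt14 (p q k r s : ℝ) (hp : 1 < p) (hq : 1 < q) (hk : 1 < k)
    (hr : r ∈ Ioo (0:ℝ) 1) (hs : s ∈ Ioo (0:ℝ) 1) (hrs : s ≤ r) :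
    arsinhpq p q (s ^ k) / arsinhpq p q (r ^ k) ≤ (arsinhpq p q s / arsinhpq p q r) ^ k := by
  obtain ⟨hr0, hr1⟩ := hr
  obtain ⟨hs0, hs1⟩ := hs
  have hp0 : (0:ℝ) < p := lt_trans one_pos hp
  have hq0 : (0:ℝ) < q := lt_trans one_pos hq
  have hk0 : (0:ℝ) < k := lt_trans one_pos hk
  rcases eq_or_lt_of_le hrs with rfl | hsr
  · rw [div_self (F_pos hq0 (Real.rpow_pos_of_pos hs0 k)).ne',
      div_self (F_pos hq0 hs0).ne', Real.one_rpow]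
  -- the derivative of Φ at any x > 0
  have hΦD : ∀ x : ℝ, 0 < x →
      HasDerivAt (fun y => Real.log (arsinhpq p q (y ^ k)) - k * Real.log (arsinhpq p q y))
        ((1 + (x ^ k) ^ q) ^ (-1/p) * (k * x ^ (k - 1)) / arsinhpq p q (x ^ k)
          - k * ((1 + x ^ q) ^ (-1/p) / arsinhpq p q x)) x := by
    intro x hx0
    have hxk0 : (0:ℝ) < x ^ k := Real.rpow_pos_of_pos hx0 k
    have hxk : HasDerivAt (fun y : ℝ => y ^ k) (k * x ^ (k - 1)) x :=
      Real.hasDerivAt_rpow_const (Or.inl hx0.ne')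
    have hFk : HasDerivAt (fun y : ℝ => arsinhpq p q (y ^ k))
        ((1 + (x ^ k) ^ q) ^ (-1/p) * (k * x ^ (k - 1))) x :=
      by exact (F_hasDerivAt (p := p) hq0 hxk0).comp x hxk
    have hlog1 := hFk.log (F_pos hq0 hxk0).ne'
    have hlog2 := ((F_hasDerivAt (p := p) hq0 hx0).log (F_pos (p := p) hq0 hx0).ne').const_mul k
    exact hlog1.sub hlog2
  -- Φ is monotone on [s, r]
  have hΦ : MonotoneOn
      (fun y => Real.log (arsinhpq p q (y ^ k)) - k * Real.log (arsinhpq p q y)) (Icc s r) := by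
    apply monotoneOn_of_deriv_nonneg (convex_Icc s r)
    · exact fun x hx =>
        ((hΦD x (lt_of_lt_of_le hs0 hx.1)).differentiableAt).differentiableWithinAt.continuousWithinAt
    · rw [interior_Icc]
      exact fun x hx =>
        ((hΦD x (lt_trans hs0 hx.1)).differentiableAt).differentiableWithinAt
    · rw [interior_Icc]
      intro x hx
      have hx0 : (0:ℝ) < x := lt_trans hs0 hx.1
      have hx1 : x < 1 := lt_trans hx.2 hr1
      rw [(hΦD x hx0).deriv]
      have hxk0 : (0:ℝ) < x ^ k := Real.rpow_pos_of_pos hx0 k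
      have hyx : x ^ k ≤ x := by
        have := Real.rpow_le_rpow_of_exponent_ge hx0 hx1.le hk.le
        rwa [Real.rpow_one] at this
      have hxk1 : x ^ k < 1 := lt_of_le_of_lt hyx hx1
      have key := h_antitone hp hq ⟨hxk0, hxk1⟩ ⟨hx0, hx1⟩ hyx
      simp only at key
      have e3 : x ^ (k - 1) = x ^ k / x := by
        rw [Real.rpow_sub hx0, Real.rpow_one]
      rw [sub_nonneg, e3]
      have hFx : (0:ℝ) < arsinhpq p q x := F_pos hq0 hx0
      have hFxk : (0:ℝ) < arsinhpq p q (x ^ k) := F_pos hq0 hxk0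
      have eL : k * ((1 + x ^ q) ^ (-1/p) / arsinhpq p q x)
          = (k / x) * (x * (1 + x ^ q) ^ (-1/p) / arsinhpq p q x) := by
        field_simp
      have eR : (1 + (x ^ k) ^ q) ^ (-1/p) * (k * (x ^ k / x)) / arsinhpq p q (x ^ k)
          = (k / x) * (x ^ k * (1 + (x ^ k) ^ q) ^ (-1/p) / arsinhpq p q (x ^ k)) := by
        field_simp
      rw [eL, eR]
      exact mul_le_mul_of_nonneg_left key (by positivity)
  have hΦsr := hΦ (left_mem_Icc.2 hrs) (right_mem_Icc.2 hrs) hrs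
  simp only at hΦsr
  have hFs : (0:ℝ) < arsinhpq p q s := F_pos hq0 hs0
  have hFr : (0:ℝ) < arsinhpq p q r := F_pos hq0 hr0
  have hFsk : (0:ℝ) < arsinhpq p q (s ^ k) := F_pos hq0 (Real.rpow_pos_of_pos hs0 k)
  have hFrk : (0:ℝ) < arsinhpq p q (r ^ k) := F_pos hq0 (Real.rpow_pos_of_pos hr0 k)
  rw [← Real.log_le_log_iff (by positivity) (Real.rpow_pos_of_pos (by positivity) k),
    Real.log_div hFsk.ne' hFrk.ne', Real.log_rpow (div_pos hFs hFr),
    Real.log_div hFs.ne' hFr.ne']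
  nlinarith [hΦsr]
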